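/- Let A₀ ∈ ℓ²(ℤ/Nℤ; ℂ) and let A be the global solution of the damped, driven discrete nonlinear Schrödinger equation with A(0) = A₀. Then there exists a positive constant C_X, depending only on ‖A₀‖, ξ, ĥ, α̂, ω and N, such that for every ε ∈ (0,1) and every t ≥ 0 the leading-order rotating-wave approximation X satisfies ‖X(t)‖ + ‖X'(t)‖ ≤ √ε · C_X, where X'(t) is the derivative of X in t. -/

import Mathlib

open Complex Finset Set

noncomputable section

/-- Discrete Laplacian with periodic boundary conditions on `ZMod N` (complex-valued). -/
def lapC {N : ℕ} (B : ZMod N → ℂ) (j : ZMod N) : ℂ :=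
  B (j + 1) - 2 * B j + B (j - 1)

/-- ℓ² norm on `ZMod N` (complex-valued sequences). -/
def l2C {N : ℕ} [NeZero N] (B : ZMod N → ℂ) : ℝ :=
  Real.sqrt (∑ j, ‖B j‖ ^ 2)

/-- Discrete Laplacian with periodic boundary conditions on `ZMod N` (real-valued). -/
def lapR {N : ℕ} (B : ZMod N → ℝ) (j : ZMod N) : ℝ :=
  B (j + 1) - 2 * B j + B (j - 1)

/-- ℓ² norm on `ZMod N` (real-valued sequences). -/
def l2R {N : ℕ} [NeZero N] (B : ZMod N → ℝ) : ℝ :=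
  Real.sqrt (∑ j, (B j) ^ 2)

/-- `A` solves the damped, driven discrete nonlinear Schrödinger equation
`i A_j' + 3ξ|A_j|²A_j − (Δ₂A)_j + i α̂ A_j − ĥ + ω A_j = 0` at every `τ ∈ s`,
with derivatives taken within `s`. -/
def SolvesDNLSOn {N : ℕ} (ξ a h ω : ℝ) (A : ℝ → ZMod N → ℂ) (s : Set ℝ) : Prop :=
  ∀ τ ∈ s, ∀ j, ∃ d : ℂ, HasDerivWithinAt (fun t => A t j) d s τ ∧
    Complex.I * d + 3 * (ξ : ℂ) * ((‖A τ j‖ : ℂ)) ^ 2 * A τ j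
      - lapC (A τ) j + Complex.I * (a : ℂ) * A τ j - (h : ℂ) + (ω : ℂ) * A τ j = 0

/-- `A` solves the damped, driven discrete nonlinear Schrödinger equation globally. -/
def SolvesDNLS {N : ℕ} (ξ a h ω : ℝ) (A : ℝ → ZMod N → ℂ) : Prop :=
  ∀ τ : ℝ, ∀ j, ∃ d : ℂ, HasDerivAt (fun t => A t j) d τ ∧
    Complex.I * d + 3 * (ξ : ℂ) * ((‖A τ j‖ : ℂ)) ^ 2 * A τ j
      - lapC (A τ) j + Complex.I * (a : ℂ) * A τ j - (h : ℂ) + (ω : ℂ) * A τ j = 0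

/-- The real-valued rotating-wave (leading-order) approximation
`X_j(t) = 2 Re(√ε A_j(εt/2) e^{iΩt}) + (ξ ε^{3/2}/4) Re(A_j(εt/2)³ e^{3iΩt})`
with `Ω = 1 − εω/2`. -/
def Xrw {N : ℕ} (ξ ω ε : ℝ) (A : ℝ → ZMod N → ℂ) (t : ℝ) (j : ZMod N) : ℝ :=
  2 * ((Real.sqrt ε : ℂ) * A (ε * t / 2) j
        * Complex.exp (Complex.I * (((1 - ε * ω / 2) * t : ℝ) : ℂ))).re
    + (ξ * ε ^ ((3:ℝ)/2) / 4) * ((A (ε * t / 2) j) ^ 3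
        * Complex.exp (3 * Complex.I * (((1 - ε * ω / 2) * t : ℝ) : ℂ))).re

def Fexpr {N : ℕ} (ξ a h ω : ℝ) (A : ℝ → ZMod N → ℂ) (τ : ℝ) (j : ZMod N) : ℂ :=
  3 * (ξ : ℂ) * ((‖A τ j‖ : ℂ)) ^ 2 * A τ j - lapC (A τ) j
    + Complex.I * (a : ℂ) * A τ j - (h : ℂ) + (ω : ℂ) * A τ j

lemma hasDerivAt_of_solves {N : ℕ} {ξ a h ω : ℝ} {A : ℝ → ZMod N → ℂ}
    (hA : SolvesDNLS ξ a h ω A) (τ : ℝ) (j : ZMod N) :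
    HasDerivAt (fun t => A t j) (Complex.I * Fexpr ξ a h ω A τ j) τ := by
  obtain ⟨d, hd, heq⟩ := hA τ j
  have : d = Complex.I * Fexpr ξ a h ω A τ j := by
    have hI : (Complex.I)^2 = -1 := Complex.I_sq
    unfold Fexpr
    linear_combination (-Complex.I) * heq + d * hI
  rwa [this] at hd

lemma lap_sum_zero {N : ℕ} [NeZero N] (z : ZMod N → ℂ) :
    ∑ j, ((z j).re * (lapC z j).im - (z j).im * (lapC z j).re) = 0 := by
  have key : ∑ j, ((z j).re * (z (j - 1)).im - (z j).im * (z (j - 1)).re)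
      = ∑ j, ((z (j + 1)).re * (z j).im - (z (j + 1)).im * (z j).re) := by
    refine Fintype.sum_equiv (Equiv.subRight (1 : ZMod N)) _ _ ?_
    intro j
    simp [Equiv.subRight_apply, sub_add_cancel]
  have expand : ∀ j : ZMod N, (z j).re * (lapC z j).im - (z j).im * (lapC z j).re
      = ((z j).re * (z (j + 1)).im - (z j).im * (z (j + 1)).re)
        + ((z j).re * (z (j - 1)).im - (z j).im * (z (j - 1)).re) := by
    intro j
    simp only [lapC, Complex.add_im, Complex.add_re, Complex.sub_im, Complex.sub_re,
      Complex.mul_im, Complex.mul_re, Complex.re_ofNat, Complex.im_ofNat]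
    ring
  rw [Finset.sum_congr rfl (fun j _ => expand j), Finset.sum_add_distrib, key,
    ← Finset.sum_add_distrib]
  apply Finset.sum_eq_zero
  intro j _
  ring

def yfun {N : ℕ} [NeZero N] (A : ℝ → ZMod N → ℂ) (τ : ℝ) : ℝ :=
  ∑ j, Complex.normSq (A τ j)

lemma hasDerivAt_normSq_comp {f : ℝ → ℂ} {d : ℂ} {t : ℝ} (hf : HasDerivAt f d t) :
    HasDerivAt (fun s => Complex.normSq (f s))
      (2 * ((f t).re * d.re + (f t).im * d.im)) t := by
  have hre : HasDerivAt (fun s => (f s).re) d.re t :=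
    Complex.reCLM.hasFDerivAt.comp_hasDerivAt t hf
  have him : HasDerivAt (fun s => (f s).im) d.im t :=
    Complex.imCLM.hasFDerivAt.comp_hasDerivAt t hf
  have H := (hre.mul hre).add (him.mul him)
  simp only [Complex.normSq_apply]
  exact H.congr_deriv (by ring)

lemma yfun_nonneg {N : ℕ} [NeZero N] (A : ℝ → ZMod N → ℂ) (τ : ℝ) : 0 ≤ yfun A τ :=
  Finset.sum_nonneg fun j _ => Complex.normSq_nonneg _

lemma yderiv {N : ℕ} [NeZero N] {ξ a h ω : ℝ} {A : ℝ → ZMod N → ℂ}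
    (hA : SolvesDNLS ξ a h ω A) (τ : ℝ) :
    HasDerivAt (yfun A)
      (∑ j, 2 * ((A τ j).re * (Complex.I * Fexpr ξ a h ω A τ j).re
        + (A τ j).im * (Complex.I * Fexpr ξ a h ω A τ j).im)) τ :=
  HasDerivAt.fun_sum fun j _ => hasDerivAt_normSq_comp (hasDerivAt_of_solves hA τ j)

lemma yderiv_le {N : ℕ} [NeZero N] {ξ a h ω : ℝ} (ha : 0 < a) {A : ℝ → ZMod N → ℂ}
    (τ : ℝ) :
    (∑ j, 2 * ((A τ j).re * (Complex.I * Fexpr ξ a h ω A τ j).re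
        + (A τ j).im * (Complex.I * Fexpr ξ a h ω A τ j).im))
      ≤ -a * yfun A τ + N * h ^ 2 / a := by
  have hpt : ∀ j : ZMod N, 2 * ((A τ j).re * (Complex.I * Fexpr ξ a h ω A τ j).re
        + (A τ j).im * (Complex.I * Fexpr ξ a h ω A τ j).im)
      = -2 * a * Complex.normSq (A τ j) - 2 * h * (A τ j).im
        + 2 * ((A τ j).re * (lapC (A τ) j).im - (A τ j).im * (lapC (A τ) j).re) := by
    intro j
    simp only [Fexpr, ← Complex.ofReal_pow, Complex.mul_re, Complex.mul_im,
      Complex.sub_re, Complex.sub_im, Complex.add_re, Complex.add_im,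
      Complex.I_re, Complex.I_im, Complex.ofReal_re, Complex.ofReal_im,
      Complex.normSq_apply, Complex.re_ofNat, Complex.im_ofNat]
    ring
  rw [Finset.sum_congr rfl fun j _ => hpt j, Finset.sum_add_distrib,
    ← Finset.mul_sum, lap_sum_zero (A τ), mul_zero, add_zero]
  have hsum : ∑ j : ZMod N, (-2 * a * Complex.normSq (A τ j) - 2 * h * (A τ j).im)
      ≤ ∑ j : ZMod N, (-a * Complex.normSq (A τ j) + h ^ 2 / a) := by
    refine Finset.sum_le_sum fun j _ => ?_
    have h1 : ((A τ j).im) ^ 2 ≤ Complex.normSq (A τ j) := by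
      simp only [Complex.normSq_apply]; nlinarith [sq_nonneg (A τ j).re]
    have h2 : a ^ 2 * ((A τ j).im) ^ 2 ≤ a ^ 2 * Complex.normSq (A τ j) :=
      mul_le_mul_of_nonneg_left h1 (sq_nonneg a)
    have h4 : h ^ 2 / a * a = h ^ 2 := div_mul_cancel₀ _ ha.ne'
    nlinarith [sq_nonneg (a * (A τ j).im + h), ha, h2, h4]
  refine hsum.trans (le_of_eq ?_)
  rw [yfun, Finset.sum_add_distrib, Finset.sum_const, Finset.card_univ, ZMod.card,
    nsmul_eq_mul, ← Finset.mul_sum]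
  ring

lemma y_bound {N : ℕ} [NeZero N] {ξ a h ω : ℝ} (ha : 0 < a) {A : ℝ → ZMod N → ℂ}
    (hA : SolvesDNLS ξ a h ω A) (τ : ℝ) (hτ : 0 ≤ τ) :
    yfun A τ ≤ yfun A 0 + N * h ^ 2 / a ^ 2 := by
  set c : ℝ := N * h ^ 2 / a ^ 2 with hc
  have hc0 : 0 ≤ c := by positivity
  set u : ℝ → ℝ := fun s => (yfun A s - c) * Real.exp (a * s) with hu
  have hderiv : ∀ s : ℝ, HasDerivAt u
      ((∑ j, 2 * ((A s j).re * (Complex.I * Fexpr ξ a h ω A s j).re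
        + (A s j).im * (Complex.I * Fexpr ξ a h ω A s j).im)) * Real.exp (a * s)
        + (yfun A s - c) * (Real.exp (a * s) * a)) s := by
    intro s
    have hexp : HasDerivAt (fun s : ℝ => Real.exp (a * s)) (Real.exp (a * s) * a) s := by
      simpa using ((hasDerivAt_id s).const_mul a).exp
    exact ((yderiv hA s).sub_const c).mul hexp
  have hanti : Antitone u := by
    refine antitone_of_deriv_nonpos (fun s => (hderiv s).differentiableAt) (fun s => ?_)
    rw [(hderiv s).deriv]
    have hle := yderiv_le (ξ := ξ) (ω := ω) (a := a) (h := h) ha (A := A) s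
    have hE : 0 < Real.exp (a * s) := Real.exp_pos _
    have hac : a * c = N * h ^ 2 / a := by
      rw [hc]; field_simp
    nlinarith [mul_le_mul_of_nonneg_right hle hE.le]
  have hu0 : u τ ≤ u 0 := hanti hτ
  have hE1 : 1 ≤ Real.exp (a * τ) := Real.one_le_exp (by positivity)
  have hy0 : 0 ≤ yfun A 0 := yfun_nonneg A 0
  simp only [hu, mul_zero, Real.exp_zero, mul_one] at hu0
  rcases le_or_gt (yfun A τ) c with hcase | hcase
  · linarith
  · have h1 : yfun A τ - c ≤ (yfun A τ - c) * Real.exp (a * τ) :=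
      le_mul_of_one_le_right (by linarith) hE1
    linarith

lemma abs_le_M {N : ℕ} [NeZero N] {ξ a h ω : ℝ} (ha : 0 < a) {A : ℝ → ZMod N → ℂ}
    (hA : SolvesDNLS ξ a h ω A) (τ : ℝ) (hτ : 0 ≤ τ) (j : ZMod N) :
    ‖A τ j‖ ≤ Real.sqrt (yfun A 0 + N * h ^ 2 / a ^ 2) := by
  have h1 : Complex.normSq (A τ j) ≤ yfun A τ :=
    Finset.single_le_sum (fun i _ => Complex.normSq_nonneg (A τ i)) (Finset.mem_univ j)
  have h2 := y_bound ha hA τ hτ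
  rw [Complex.norm_def]
  exact Real.sqrt_le_sqrt (by linarith)

lemma abs_F_le {N : ℕ} [NeZero N] {ξ a h ω : ℝ} (ha : 0 < a) {A : ℝ → ZMod N → ℂ}
    {τ : ℝ} {M : ℝ} (hM0 : 0 ≤ M) (hM : ∀ j, ‖A τ j‖ ≤ M) (j : ZMod N) :
    ‖Fexpr ξ a h ω A τ j‖
      ≤ 3 * |ξ| * M ^ 3 + 4 * M + a * M + |h| + |ω| * M := by
  have hz := hM j
  have habs : ∀ k : ZMod N, ‖A τ k‖ ≤ M := hM
  have t1 : ‖3 * (ξ : ℂ) * ((‖A τ j‖ : ℂ)) ^ 2 * A τ j‖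
      ≤ 3 * |ξ| * M ^ 3 := by
    rw [norm_mul, norm_mul, norm_mul, norm_pow]
    simp only [Complex.norm_real, Real.norm_eq_abs, abs_norm, Complex.norm_ofNat]
    have h0 : (0:ℝ) ≤ ‖A τ j‖ := norm_nonneg _
    calc 3 * |ξ| * ‖A τ j‖ ^ 2 * ‖A τ j‖
        = 3 * |ξ| * ‖A τ j‖ ^ 3 := by ring
      _ ≤ 3 * |ξ| * M ^ 3 := by
          have := pow_le_pow_left₀ h0 hz 3
          nlinarith [abs_nonneg ξ]
  have t2 : ‖lapC (A τ) j‖ ≤ 4 * M := by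
    unfold lapC
    calc ‖A τ (j+1) - 2 * A τ j + A τ (j-1)‖
        ≤ ‖A τ (j+1) - 2 * A τ j‖ + ‖A τ (j-1)‖ :=
          norm_add_le _ _
      _ ≤ ‖A τ (j+1)‖ + ‖2 * A τ j‖ + ‖A τ (j-1)‖ := by
          have := norm_sub_le (A τ (j+1)) (2 * A τ j)
          linarith
      _ ≤ M + 2 * M + M := by
          have h2 : ‖2 * A τ j‖ = 2 * ‖A τ j‖ := by
            rw [norm_mul]; simp
          have := habs (j+1); have := habs (j-1); have := habs j
          rw [h2]; gcongr <;> assumption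
      _ = 4 * M := by ring
  have t3 : ‖Complex.I * (a : ℂ) * A τ j‖ ≤ a * M := by
    rw [norm_mul, norm_mul]
    simp only [Complex.norm_I, one_mul, Complex.norm_real, Real.norm_eq_abs, abs_of_pos ha]
    exact mul_le_mul_of_nonneg_left hz ha.le
  have t4 : ‖(h : ℂ)‖ = |h| := (Complex.norm_real h).trans (Real.norm_eq_abs h)
  have t5 : ‖(ω : ℂ) * A τ j‖ ≤ |ω| * M := by
    rw [norm_mul, Complex.norm_real, Real.norm_eq_abs]
    exact mul_le_mul_of_nonneg_left hz (abs_nonneg ω)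
  unfold Fexpr
  calc ‖3 * (ξ:ℂ) * ((‖A τ j‖ : ℂ))^2 * A τ j - lapC (A τ) j
        + Complex.I * (a:ℂ) * A τ j - (h:ℂ) + (ω:ℂ) * A τ j‖
      ≤ ‖3 * (ξ:ℂ) * ((‖A τ j‖ : ℂ))^2 * A τ j - lapC (A τ) j
        + Complex.I * (a:ℂ) * A τ j - (h:ℂ)‖ + ‖(ω:ℂ) * A τ j‖ :=
        norm_add_le _ _
    _ ≤ ‖3 * (ξ:ℂ) * ((‖A τ j‖ : ℂ))^2 * A τ j - lapC (A τ) j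
        + Complex.I * (a:ℂ) * A τ j‖ + ‖(h:ℂ)‖ + ‖(ω:ℂ) * A τ j‖ := by
        have := norm_sub_le (3 * (ξ:ℂ) * ((‖A τ j‖ : ℂ))^2 * A τ j
          - lapC (A τ) j + Complex.I * (a:ℂ) * A τ j) ((h:ℂ))
        linarith
    _ ≤ ‖3 * (ξ:ℂ) * ((‖A τ j‖ : ℂ))^2 * A τ j - lapC (A τ) j‖
        + ‖Complex.I * (a:ℂ) * A τ j‖ + ‖(h:ℂ)‖
        + ‖(ω:ℂ) * A τ j‖ := by
        have := norm_add_le (3 * (ξ:ℂ) * ((‖A τ j‖ : ℂ))^2 * A τ j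
          - lapC (A τ) j) (Complex.I * (a:ℂ) * A τ j)
        linarith
    _ ≤ ‖3 * (ξ:ℂ) * ((‖A τ j‖ : ℂ))^2 * A τ j‖
        + ‖lapC (A τ) j‖ + ‖Complex.I * (a:ℂ) * A τ j‖
        + ‖(h:ℂ)‖ + ‖(ω:ℂ) * A τ j‖ := by
        have := norm_sub_le (3 * (ξ:ℂ) * ((‖A τ j‖ : ℂ))^2 * A τ j)
          (lapC (A τ) j)
        linarith
    _ ≤ 3 * |ξ| * M ^ 3 + 4 * M + a * M + |h| + |ω| * M := by
        rw [t4]; gcongr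

def kc (ε ω : ℝ) : ℂ := Complex.I * (((1 - ε*ω/2 : ℝ)) : ℂ)

def Vexpr {N : ℕ} (ξ a h ω ε : ℝ) (A : ℝ → ZMod N → ℂ) (t : ℝ) (j : ZMod N) : ℝ :=
  2 * (((Real.sqrt ε : ℂ) * ((((ε/2 : ℝ)) : ℂ) * (Complex.I * Fexpr ξ a h ω A (ε*t/2) j))
        * Complex.exp (kc ε ω * t)
      + (Real.sqrt ε : ℂ) * A (ε*t/2) j * (Complex.exp (kc ε ω * t) * kc ε ω)).re)
  + (ξ * ε ^ ((3:ℝ)/2) / 4) * ((3 * (A (ε*t/2) j)^2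
        * ((((ε/2 : ℝ)) : ℂ) * (Complex.I * Fexpr ξ a h ω A (ε*t/2) j))
        * Complex.exp (3 * (kc ε ω * t))
      + (A (ε*t/2) j)^3 * (Complex.exp (3 * (kc ε ω * t)) * (3 * kc ε ω))).re)

lemma hasDerivAt_X {N : ℕ} [NeZero N] {ξ a h ω : ℝ} {A : ℝ → ZMod N → ℂ}
    (hA : SolvesDNLS ξ a h ω A) (ε : ℝ) (t : ℝ) (j : ZMod N) :
    HasDerivAt (fun s => Xrw ξ ω ε A s j) (Vexpr ξ a h ω ε A t j) t := by
  set κ : ℂ := kc ε ω with hκ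
  set dd : ℂ := Complex.I * Fexpr ξ a h ω A (ε*t/2) j with hdd
  have hfun : (fun s => Xrw ξ ω ε A s j)
      = fun s => 2 * (((Real.sqrt ε : ℂ) * A (ε*s/2) j * Complex.exp (κ * s)).re)
        + (ξ * ε ^ ((3:ℝ)/2) / 4) * (((A (ε*s/2) j)^3 * Complex.exp (3 * (κ * s))).re) := by
    funext s
    unfold Xrw
    rw [hκ]
    unfold kc
    push_cast
    ring_nf
  rw [hfun]
  have hin : HasDerivAt (fun s : ℝ => ε * s / 2) (ε/2) t := by
    simpa using ((hasDerivAt_id t).const_mul ε).div_const 2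
  have h1 : HasDerivAt (fun s => A (ε*s/2) j) ((((ε/2 : ℝ)) : ℂ) * dd) t := by
    have H := (hasDerivAt_of_solves hA (ε*t/2) j).scomp t hin
    simpa [Function.comp_def, Complex.real_smul, hdd] using H
  have hE1 : HasDerivAt (fun s : ℝ => Complex.exp (κ * s)) (Complex.exp (κ * t) * κ) t := by
    have hc : HasDerivAt (fun s : ℝ => κ * (s : ℂ)) κ t := by
      simpa using (Complex.ofRealCLM.hasDerivAt (x := t)).const_mul κ
    exact hc.cexp
  have hE3 : HasDerivAt (fun s : ℝ => Complex.exp (3 * (κ * s)))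
      (Complex.exp (3 * (κ * t)) * (3 * κ)) t := by
    have hc : HasDerivAt (fun s : ℝ => 3 * (κ * (s : ℂ))) (3 * κ) t := by
      have := (Complex.ofRealCLM.hasDerivAt (x := t)).const_mul (3 * κ)
      simpa [mul_assoc] using this
    exact hc.cexp
  have hP : HasDerivAt (fun s => (Real.sqrt ε : ℂ) * A (ε*s/2) j * Complex.exp (κ * s))
      ((Real.sqrt ε : ℂ) * ((((ε/2 : ℝ)) : ℂ) * dd) * Complex.exp (κ * t)
        + (Real.sqrt ε : ℂ) * A (ε*t/2) j * (Complex.exp (κ * t) * κ)) t :=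
    (h1.const_mul _).mul hE1
  have hQ : HasDerivAt (fun s => (A (ε*s/2) j)^3 * Complex.exp (3 * (κ * s)))
      (3 * (A (ε*t/2) j)^2 * ((((ε/2 : ℝ)) : ℂ) * dd) * Complex.exp (3 * (κ * t))
        + (A (ε*t/2) j)^3 * (Complex.exp (3 * (κ * t)) * (3 * κ))) t := by
    have hcube : HasDerivAt (fun s => (A (ε*s/2) j)^3)
        (3 * (A (ε*t/2) j)^2 * ((((ε/2 : ℝ)) : ℂ) * dd)) t := by
      have heq : (fun s => (A (ε*s/2) j)^3)
          = fun s => A (ε*s/2) j * (A (ε*s/2) j * A (ε*s/2) j) := by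
        funext s; ring
      rw [heq]
      have H := h1.fun_mul (h1.fun_mul h1)
      exact H.congr_deriv (by ring)
    exact hcube.mul hE3
  have hPre := Complex.reCLM.hasFDerivAt.comp_hasDerivAt t hP
  have hQre := Complex.reCLM.hasFDerivAt.comp_hasDerivAt t hQ
  exact (hPre.const_mul 2).add (hQre.const_mul (ξ * ε ^ ((3:ℝ)/2) / 4))

lemma abs_exp_kc (ε ω t : ℝ) : ‖Complex.exp (kc ε ω * t)‖ = 1 := by
  rw [Complex.norm_exp]
  simp [kc, Complex.mul_re, Complex.mul_im]

lemma abs_exp_kc3 (ε ω t : ℝ) : ‖Complex.exp (3 * (kc ε ω * t))‖ = 1 := by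
  rw [Complex.norm_exp]
  simp [kc, Complex.mul_re, Complex.mul_im]

lemma abs_kc_le (ε ω : ℝ) (hε : 0 < ε) (hε1 : ε < 1) :
    ‖kc ε ω‖ ≤ 1 + |ω| / 2 := by
  unfold kc
  rw [norm_mul]
  simp only [Complex.norm_I, one_mul, Complex.norm_real, Real.norm_eq_abs]
  have h1 : |1 - ε * ω / 2| ≤ 1 + |ε * ω / 2| := by
    calc |1 - ε * ω / 2| ≤ |(1:ℝ)| + |ε * ω / 2| := abs_sub _ _
      _ = 1 + |ε * ω / 2| := by rw [abs_one]
  have h2 : |ε * ω / 2| ≤ |ω| / 2 := by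
    rw [abs_div, abs_mul]
    have : |ε| ≤ 1 := by rw [abs_of_pos hε]; exact hε1.le
    have := abs_nonneg ω
    rw [show |(2:ℝ)| = 2 by norm_num]
    nlinarith [abs_nonneg ε]
  linarith

lemma rpow32_le (ε : ℝ) (hε : 0 < ε) (hε1 : ε < 1) :
    ε ^ ((3:ℝ)/2) ≤ Real.sqrt ε := by
  rw [Real.sqrt_eq_rpow]
  exact Real.rpow_le_rpow_of_exponent_ge hε hε1.le (by norm_num)

lemma rpow32_nonneg (ε : ℝ) (hε : 0 < ε) : 0 ≤ ε ^ ((3:ℝ)/2) :=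
  Real.rpow_nonneg hε.le _

lemma l2R_le {N : ℕ} [NeZero N] {b : ℝ} (hb : 0 ≤ b) (f : ZMod N → ℝ)
    (hf : ∀ j, |f j| ≤ b) : l2R f ≤ Real.sqrt N * b := by
  unfold l2R
  have hsum : ∑ j, (f j)^2 ≤ ∑ _j : ZMod N, b^2 := by
    refine Finset.sum_le_sum fun j _ => ?_
    rw [← _root_.sq_abs (f j)]
    exact pow_le_pow_left₀ (abs_nonneg _) (hf j) 2
  rw [Finset.sum_const, Finset.card_univ, ZMod.card, nsmul_eq_mul] at hsum
  calc Real.sqrt (∑ j, (f j)^2) ≤ Real.sqrt ((N : ℝ) * b^2) := Real.sqrt_le_sqrt hsum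
    _ = Real.sqrt N * b := by
        rw [Real.sqrt_mul (Nat.cast_nonneg N), Real.sqrt_sq hb]

lemma X_pointwise {N : ℕ} [NeZero N] {ξ ω ε M t : ℝ} {A : ℝ → ZMod N → ℂ} (j : ZMod N)
    (hε : 0 < ε) (hε1 : ε < 1) (hM0 : 0 ≤ M)
    (hMj : ‖A (ε*t/2) j‖ ≤ M) :
    |Xrw ξ ω ε A t j| ≤ Real.sqrt ε * (2*M + |ξ| * M^3/4) := by
  have hs0 : (0:ℝ) ≤ Real.sqrt ε := Real.sqrt_nonneg ε
  have e1 : ‖Complex.exp (Complex.I * (((1 - ε * ω / 2) * t : ℝ) : ℂ))‖ = 1 := by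
    rw [Complex.norm_exp]; simp [Complex.mul_re]
  have e3 : ‖Complex.exp (3 * Complex.I * (((1 - ε * ω / 2) * t : ℝ) : ℂ))‖ = 1 := by
    rw [Complex.norm_exp]; simp [Complex.mul_re, Complex.mul_im]
  have habsA : ‖A (ε * t / 2) j‖ ≤ M := hMj
  have h1 : |((Real.sqrt ε : ℂ) * A (ε * t / 2) j
      * Complex.exp (Complex.I * (((1 - ε * ω / 2) * t : ℝ) : ℂ))).re| ≤ Real.sqrt ε * M := by
    refine (Complex.abs_re_le_norm _).trans ?_
    rw [norm_mul, norm_mul, e1, mul_one, Complex.norm_real, Real.norm_eq_abs, _root_.abs_of_nonneg hs0]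
    exact mul_le_mul_of_nonneg_left habsA hs0
  have h2 : |((A (ε * t / 2) j) ^ 3
      * Complex.exp (3 * Complex.I * (((1 - ε * ω / 2) * t : ℝ) : ℂ))).re| ≤ M^3 := by
    refine (Complex.abs_re_le_norm _).trans ?_
    rw [norm_mul, norm_pow, e3, mul_one]
    exact pow_le_pow_left₀ (norm_nonneg _) habsA 3
  have hc : |ξ * ε ^ ((3:ℝ)/2) / 4| ≤ |ξ| * Real.sqrt ε / 4 := by
    rw [abs_div, abs_mul, _root_.abs_of_nonneg (rpow32_nonneg ε hε)]
    have := rpow32_le ε hε hε1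
    have : |ξ| * ε ^ ((3:ℝ)/2) ≤ |ξ| * Real.sqrt ε :=
      mul_le_mul_of_nonneg_left this (abs_nonneg ξ)
    rw [show |(4:ℝ)| = 4 by norm_num]
    linarith
  unfold Xrw
  have := abs_add_le (2 * ((Real.sqrt ε : ℂ) * A (ε * t / 2) j
      * Complex.exp (Complex.I * (((1 - ε * ω / 2) * t : ℝ) : ℂ))).re)
    ((ξ * ε ^ ((3:ℝ)/2) / 4) * ((A (ε * t / 2) j) ^ 3
      * Complex.exp (3 * Complex.I * (((1 - ε * ω / 2) * t : ℝ) : ℂ))).re)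
  refine this.trans ?_
  rw [abs_mul, abs_mul]
  have hM3 : (0:ℝ) ≤ M^3 := by positivity
  have k1 : _root_.abs (2:ℝ) * _root_.abs (((Real.sqrt ε : ℂ) * A (ε * t / 2) j
      * Complex.exp (Complex.I * (((1 - ε * ω / 2) * t : ℝ) : ℂ))).re) ≤ 2 * (Real.sqrt ε * M) := by
    rw [show _root_.abs (2:ℝ) = 2 by norm_num]
    linarith
  have k2 : _root_.abs (ξ * ε ^ ((3:ℝ)/2) / 4) * _root_.abs (((A (ε * t / 2) j) ^ 3
      * Complex.exp (3 * Complex.I * (((1 - ε * ω / 2) * t : ℝ) : ℂ))).re)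
      ≤ (|ξ| * Real.sqrt ε / 4) * M^3 :=
    mul_le_mul hc h2 (abs_nonneg _) (by positivity)
  nlinarith [abs_nonneg ξ]

lemma abs_re_add_le (z w : ℂ) : |(z + w).re| ≤ ‖z‖ + ‖w‖ :=
  (Complex.abs_re_le_norm _).trans (norm_add_le z w)

lemma V_pointwise {N : ℕ} [NeZero N] {ξ a h ω ε M D t : ℝ} {A : ℝ → ZMod N → ℂ} (j : ZMod N)
    (hε : 0 < ε) (hε1 : ε < 1) (hM0 : 0 ≤ M) (hD0 : 0 ≤ D)
    (hMj : ‖A (ε*t/2) j‖ ≤ M)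
    (hF : ‖Fexpr ξ a h ω A (ε*t/2) j‖ ≤ D) :
    |Vexpr ξ a h ω ε A t j| ≤ Real.sqrt ε
      * (2*(D + (1 + |ω| / 2)*M) + (|ξ| / 4)*(3*M^2*D + 3*(1 + |ω| / 2)*M^3)) := by
  have hs0 : (0:ℝ) ≤ Real.sqrt ε := Real.sqrt_nonneg ε
  have hs1 : Real.sqrt ε ≤ 1 := by
    rw [show (1:ℝ) = Real.sqrt 1 by simp]
    exact Real.sqrt_le_sqrt hε1.le
  have eκ := abs_exp_kc ε ω t
  have e3 := abs_exp_kc3 ε ω t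
  have hκW : ‖kc ε ω‖ ≤ 1 + |ω| / 2 := abs_kc_le ε ω hε hε1
  have hW0 : (0:ℝ) ≤ 1 + |ω| / 2 := by positivity
  have hε2 : (0:ℝ) ≤ ε/2 := by linarith
  have hε2' : ε/2 ≤ 1 := by linarith
  have habsA := hMj
  set F : ℂ := Fexpr ξ a h ω A (ε*t/2) j with hFdef
  have aP1 : ‖(Real.sqrt ε : ℂ) * ((((ε/2 : ℝ)) : ℂ) * (Complex.I * F))
      * Complex.exp (kc ε ω * t)‖ ≤ Real.sqrt ε * D := by
    simp only [norm_mul, norm_pow, eκ, e3, Complex.norm_I, Complex.norm_real, Real.norm_eq_abs,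
      Complex.norm_ofNat, one_mul, mul_one, _root_.abs_of_nonneg hs0,
      _root_.abs_of_nonneg hε2]
    have h1 : ε/2 * ‖F‖ ≤ 1 * D :=
      mul_le_mul hε2' hF (norm_nonneg _) zero_le_one
    rw [one_mul] at h1
    exact mul_le_mul_of_nonneg_left h1 hs0
  have aP2 : ‖(Real.sqrt ε : ℂ) * A (ε*t/2) j
      * (Complex.exp (kc ε ω * t) * kc ε ω)‖ ≤ Real.sqrt ε * ((1 + |ω| / 2) * M) := by
    simp only [norm_mul, norm_pow, eκ, e3, Complex.norm_I, Complex.norm_real, Real.norm_eq_abs,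
      Complex.norm_ofNat, one_mul, mul_one, _root_.abs_of_nonneg hs0,
      _root_.abs_of_nonneg hε2]
    have h1 : ‖A (ε*t/2) j‖ * ‖kc ε ω‖ ≤ M * (1 + |ω| / 2) :=
      mul_le_mul habsA hκW (norm_nonneg _) hM0
    rw [mul_assoc]
    refine mul_le_mul_of_nonneg_left (h1.trans (le_of_eq (mul_comm _ _))) hs0
  have aQ1 : ‖3 * (A (ε*t/2) j)^2 * ((((ε/2 : ℝ)) : ℂ) * (Complex.I * F))
      * Complex.exp (3 * (kc ε ω * t))‖ ≤ 3 * M^2 * D := by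
    simp only [norm_mul, norm_pow, eκ, e3, Complex.norm_I, Complex.norm_real, Real.norm_eq_abs,
      Complex.norm_ofNat, one_mul, mul_one, _root_.abs_of_nonneg hs0,
      _root_.abs_of_nonneg hε2]
    have h1 : ‖A (ε*t/2) j‖ ^ 2 ≤ M^2 :=
      pow_le_pow_left₀ (norm_nonneg _) habsA 2
    have h2 : ε/2 * ‖F‖ ≤ 1 * D :=
      mul_le_mul hε2' hF (norm_nonneg _) zero_le_one
    rw [one_mul] at h2
    nlinarith [norm_nonneg F, sq_nonneg (‖A (ε*t/2) j‖)]
  have aQ2 : ‖(A (ε*t/2) j)^3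
      * (Complex.exp (3 * (kc ε ω * t)) * (3 * kc ε ω))‖ ≤ 3 * (1 + |ω| / 2) * M^3 := by
    simp only [norm_mul, norm_pow, eκ, e3, Complex.norm_I, Complex.norm_real, Real.norm_eq_abs,
      Complex.norm_ofNat, one_mul, mul_one, _root_.abs_of_nonneg hs0,
      _root_.abs_of_nonneg hε2]
    have h1 : ‖A (ε*t/2) j‖ ^ 3 ≤ M^3 :=
      pow_le_pow_left₀ (norm_nonneg _) habsA 3
    nlinarith [norm_nonneg (kc ε ω), pow_nonneg (norm_nonneg (A (ε*t/2) j)) 3]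
  have hcoef : _root_.abs (ξ * ε ^ ((3:ℝ)/2) / 4) ≤ |ξ| * Real.sqrt ε / 4 := by
    rw [abs_div, abs_mul, _root_.abs_of_nonneg (rpow32_nonneg ε hε)]
    have h1 := rpow32_le ε hε hε1
    have h2 : |ξ| * ε ^ ((3:ℝ)/2) ≤ |ξ| * Real.sqrt ε :=
      mul_le_mul_of_nonneg_left h1 (abs_nonneg ξ)
    rw [show _root_.abs (4:ℝ) = 4 by norm_num]
    linarith
  unfold Vexpr
  rw [← hFdef]
  have b1 := (abs_re_add_le ((Real.sqrt ε : ℂ) * ((((ε/2 : ℝ)) : ℂ) * (Complex.I * F))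
      * Complex.exp (kc ε ω * t))
    ((Real.sqrt ε : ℂ) * A (ε*t/2) j * (Complex.exp (kc ε ω * t) * kc ε ω)))
  have b2 := (abs_re_add_le (3 * (A (ε*t/2) j)^2 * ((((ε/2 : ℝ)) : ℂ) * (Complex.I * F))
      * Complex.exp (3 * (kc ε ω * t)))
    ((A (ε*t/2) j)^3 * (Complex.exp (3 * (kc ε ω * t)) * (3 * kc ε ω))))
  refine (abs_add_le _ _).trans ?_
  rw [abs_mul, abs_mul]
  have k1 : _root_.abs (2:ℝ) * _root_.abs (((Real.sqrt ε : ℂ) * ((((ε/2 : ℝ)) : ℂ)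
        * (Complex.I * F)) * Complex.exp (kc ε ω * t)
      + (Real.sqrt ε : ℂ) * A (ε*t/2) j * (Complex.exp (kc ε ω * t) * kc ε ω)).re)
      ≤ 2 * (Real.sqrt ε * D + Real.sqrt ε * ((1 + |ω| / 2) * M)) := by
    rw [show _root_.abs (2:ℝ) = 2 by norm_num]
    linarith
  have hQsum : _root_.abs ((3 * (A (ε*t/2) j)^2 * ((((ε/2 : ℝ)) : ℂ) * (Complex.I * F))
        * Complex.exp (3 * (kc ε ω * t))
      + (A (ε*t/2) j)^3 * (Complex.exp (3 * (kc ε ω * t)) * (3 * kc ε ω))).re)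
      ≤ 3 * M^2 * D + 3 * (1 + |ω| / 2) * M^3 := by linarith
  have k2 := mul_le_mul hcoef hQsum (abs_nonneg _) (by positivity)
  nlinarith [abs_nonneg ξ, hs1, mul_nonneg hs0 hD0]

def Mf (N : ℕ) (a h : ℝ) (r : ℝ) : ℝ := Real.sqrt (r^2 + N * h^2 / a^2)

def Df (N : ℕ) (ξ a h ω : ℝ) (r : ℝ) : ℝ :=
  3 * |ξ| * (Mf N a h r)^3 + 4 * Mf N a h r + |a| * Mf N a h r + |h| + |ω| * Mf N a h r

def K1f (N : ℕ) (ξ a h : ℝ) (r : ℝ) : ℝ := 2 * Mf N a h r + |ξ| * (Mf N a h r)^3 / 4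

def K2f (N : ℕ) (ξ a h ω : ℝ) (r : ℝ) : ℝ :=
  2 * (Df N ξ a h ω r + (1 + |ω| / 2) * Mf N a h r)
    + (|ξ| / 4) * (3 * (Mf N a h r)^2 * Df N ξ a h ω r + 3 * (1 + |ω| / 2) * (Mf N a h r)^3)

def CXf (N : ℕ) (ξ a h ω : ℝ) (r : ℝ) : ℝ :=
  Real.sqrt N * (K1f N ξ a h r + K2f N ξ a h ω r) + 1

lemma Mf_nonneg (N : ℕ) (a h r : ℝ) : 0 ≤ Mf N a h r := Real.sqrt_nonneg _
lemma Df_nonneg (N : ℕ) (ξ a h ω r : ℝ) : 0 ≤ Df N ξ a h ω r := by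
  unfold Df; have := Mf_nonneg N a h r; positivity
lemma K1f_nonneg (N : ℕ) (ξ a h r : ℝ) : 0 ≤ K1f N ξ a h r := by
  unfold K1f; have := Mf_nonneg N a h r; positivity
lemma K2f_nonneg (N : ℕ) (ξ a h ω r : ℝ) : 0 ≤ K2f N ξ a h ω r := by
  unfold K2f; have h1 := Mf_nonneg N a h r; have h2 := Df_nonneg N ξ a h ω r; positivity
lemma CXf_pos (N : ℕ) (ξ a h ω r : ℝ) : 0 < CXf N ξ a h ω r := by
  unfold CXf
  have h1 := K1f_nonneg N ξ a h r
  have h2 := K2f_nonneg N ξ a h ω r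
  have h3 : (0:ℝ) ≤ Real.sqrt N := Real.sqrt_nonneg _
  nlinarith

/-- bound on the rotating-wave approximation,
`‖X(t)‖ + ‖X'(t)‖ ≤ √ε C_X` for all `t ≥ 0` and `ε ∈ (0,1)`, where the positive
constant `C_X` depends only on `‖A₀‖` (and the fixed parameters `ξ, ĥ, α̂, ω, N`). -/
theorem stmt_9 (N : ℕ) [NeZero N] (ξ a h ω : ℝ) (ha : 0 < a) :
    ∃ CX : ℝ → ℝ, (∀ r : ℝ, 0 < CX r) ∧
      ∀ (A₀ : ZMod N → ℂ) (A : ℝ → ZMod N → ℂ),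
        SolvesDNLS ξ a h ω A → A 0 = A₀ →
        ∀ ε : ℝ, 0 < ε → ε < 1 → ∀ t : ℝ, 0 ≤ t →
          l2R (fun j => Xrw ξ ω ε A t j)
            + l2R (fun j => deriv (fun s => Xrw ξ ω ε A s j) t)
            ≤ Real.sqrt ε * CX (l2C A₀) := by
  refine ⟨CXf N ξ a h ω, fun r => CXf_pos N ξ a h ω r, ?_⟩
  intro A₀ A hA hA0 ε hε hε1 t ht
  set r : ℝ := l2C A₀ with hr
  have hs0 : (0:ℝ) ≤ Real.sqrt ε := Real.sqrt_nonneg ε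
  -- y(0) = r²
  have hy0 : yfun A 0 = r^2 := by
    have hsum : yfun A 0 = ∑ j, ‖A₀ j‖ ^ 2 := by
      unfold yfun
      refine Finset.sum_congr rfl fun j _ => ?_
      rw [hA0, ← Complex.sq_norm]
    rw [hsum, hr]
    unfold l2C
    rw [Real.sq_sqrt (Finset.sum_nonneg fun j _ => by positivity)]
  have hMeq : Real.sqrt (yfun A 0 + N * h^2 / a^2) = Mf N a h r := by
    rw [hy0]; rfl
  have hM0 : 0 ≤ Mf N a h r := Mf_nonneg N a h r
  have hτt : 0 ≤ ε * t / 2 := by positivity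
  have hMbound : ∀ k, ‖A (ε*t/2) k‖ ≤ Mf N a h r := by
    intro k
    have := abs_le_M ha hA (ε*t/2) hτt k
    rwa [hMeq] at this
  have hD0 : 0 ≤ Df N ξ a h ω r := Df_nonneg N ξ a h ω r
  have hFb : ∀ k, ‖Fexpr ξ a h ω A (ε*t/2) k‖ ≤ Df N ξ a h ω r := by
    intro k
    refine (abs_F_le ha hM0 hMbound k).trans ?_
    unfold Df
    rw [abs_of_pos ha]
  -- pointwise bounds
  have hXb : ∀ j, |Xrw ξ ω ε A t j| ≤ Real.sqrt ε * K1f N ξ a h r := by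
    intro j
    exact X_pointwise j hε hε1 hM0 (hMbound j)
  have hVb : ∀ j, |deriv (fun s => Xrw ξ ω ε A s j) t| ≤ Real.sqrt ε * K2f N ξ a h ω r := by
    intro j
    rw [(hasDerivAt_X hA ε t j).deriv]
    exact V_pointwise j hε hε1 hM0 hD0 (hMbound j) (hFb j)
  have hK1 : 0 ≤ Real.sqrt ε * K1f N ξ a h r :=
    mul_nonneg hs0 (K1f_nonneg N ξ a h r)
  have hK2 : 0 ≤ Real.sqrt ε * K2f N ξ a h ω r :=
    mul_nonneg hs0 (K2f_nonneg N ξ a h ω r)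
  have l1 : l2R (fun j => Xrw ξ ω ε A t j)
      ≤ Real.sqrt N * (Real.sqrt ε * K1f N ξ a h r) := l2R_le hK1 _ hXb
  have l2 : l2R (fun j => deriv (fun s => Xrw ξ ω ε A s j) t)
      ≤ Real.sqrt N * (Real.sqrt ε * K2f N ξ a h ω r) := l2R_le hK2 _ hVb
  have hN0 : (0:ℝ) ≤ Real.sqrt N := Real.sqrt_nonneg _
  have : Real.sqrt N * (Real.sqrt ε * K1f N ξ a h r)
      + Real.sqrt N * (Real.sqrt ε * K2f N ξ a h ω r)
      ≤ Real.sqrt ε * CXf N ξ a h ω r := by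
    unfold CXf
    nlinarith [mul_nonneg hN0 (K1f_nonneg N ξ a h r)]
  linarith
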